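/- For every integer N ≥ 2, every ℏ > 0, every λ = (λ_1,…,λ_N) ∈ ℝ^N, and every x = (x_1,…,x_N) ∈ ℝ^N, the Givental integrand T ↦ exp{ (1/ℏ) 𝓕_N(T; λ, x) } is absolutely integrable over ℝ^{N(N−1)/2}; in particular the Givental integral Ψ^{(N)}_λ(x) is well defined. -/

import Mathlib

open MeasureTheory

noncomputable section

/-- The index set of the Givental variables `T_{k,i}`, `1 ≤ i ≤ k ≤ N−1`: the pair
`(p₁, p₂) : Fin N × Fin N` encodes `(k, i) = (p₁+1, p₂+1)`. It has `N(N−1)/2` elements. -/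
abbrev GIdx (N : ℕ) : Type :=
  {p : Fin N × Fin N // p.2.val ≤ p.1.val ∧ p.1.val + 1 ≤ N - 1}

/-- The value `T_{k,i}` (1-based indices) of a point `T : GIdx N → ℝ` of the Givental
integration domain, with the boundary convention `T_{N,i} := x_i`; the value is `0` for
out-of-range indices. -/
def gval (N : ℕ) (x : Fin N → ℝ) (T : GIdx N → ℝ) (k i : ℕ) : ℝ :=
  if h : 1 ≤ i ∧ i ≤ k ∧ k ≤ N - 1 then
    T ⟨(⟨k - 1, by omega⟩, ⟨i - 1, by omega⟩),
       ⟨by show i - 1 ≤ k - 1; omega, by show k - 1 + 1 ≤ N - 1; omega⟩⟩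
  else if h' : k = N ∧ 1 ≤ i ∧ i ≤ N then x ⟨i - 1, by omega⟩
  else 0

/-- The Givental potential
`𝓕_N(T; λ, x) = i Σ_{k=1}^{N} λ_k (Σ_{i=1}^{k} T_{k,i} − Σ_{i=1}^{k−1} T_{k−1,i})
 − Σ_{k=1}^{N−1} Σ_{i=1}^{k} (e^{T_{k+1,i} − T_{k,i}} + e^{T_{k,i} − T_{k+1,i+1}})`,
with `T_{N,i} := x_i`. -/
def Fpot (N : ℕ) (lam x : Fin N → ℝ) (T : GIdx N → ℝ) : ℂ :=
  Complex.I * ∑ a : Fin N, (lam a : ℂ) *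
      ((∑ i ∈ Finset.Icc 1 (a.val + 1), (gval N x T (a.val + 1) i : ℂ))
        - ∑ i ∈ Finset.Icc 1 a.val, (gval N x T a.val i : ℂ))
    - ∑ k ∈ Finset.Icc 1 (N - 1), ∑ i ∈ Finset.Icc 1 k,
        ((Real.exp (gval N x T (k + 1) i - gval N x T k i) : ℂ)
          + (Real.exp (gval N x T k i - gval N x T (k + 1) (i + 1)) : ℂ))

/-- The Givental integrand `T ↦ exp( 𝓕_N(T; λ, x) / ℏ )`. -/
def givIntegrand (N : ℕ) (hbar : ℝ) (lam x : Fin N → ℝ) (T : GIdx N → ℝ) : ℂ :=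
  Complex.exp (Fpot N lam x T / (hbar : ℂ))

/-- The Givental integral `Ψ^{(N)}_λ(x) = ∫ exp( 𝓕_N(T; λ, x) / ℏ ) dT` over
`ℝ^{N(N−1)/2}`. -/
def GivPsi (N : ℕ) (hbar : ℝ) (lam : Fin N → ℝ) (x : Fin N → ℝ) : ℂ :=
  ∫ T : GIdx N → ℝ, givIntegrand N hbar lam x T

namespace GivAux
variable {N : ℕ} {x : Fin N → ℝ}

def Bsum (N : ℕ) (x : Fin N → ℝ) (T : GIdx N → ℝ) : ℝ :=
  ∑ k ∈ Finset.Icc 1 (N - 1), ∑ i ∈ Finset.Icc 1 k,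
    (Real.exp (gval N x T (k + 1) i - gval N x T k i)
      + Real.exp (gval N x T k i - gval N x T (k + 1) (i + 1)))

lemma Bsum_nonneg (T : GIdx N → ℝ) : 0 ≤ Bsum N x T :=
  Finset.sum_nonneg fun _ _ => Finset.sum_nonneg fun _ _ => by positivity

lemma gval_idx (T : GIdx N → ℝ) (v : GIdx N) :
    gval N x T (v.1.1.val + 1) (v.1.2.val + 1) = T v := by
  have h := v.2
  rw [gval, dif_pos ⟨by omega, by omega, by omega⟩]
  exact congrArg T (Subtype.ext (Prod.ext (Fin.ext (by simp)) (Fin.ext (by simp))))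

lemma gval_boundary (T : GIdx N → ℝ) {i : ℕ} (hN : 2 ≤ N) (h1 : 1 ≤ i) (h2 : i ≤ N) :
    gval N x T N i = x ⟨i - 1, by omega⟩ := by
  rw [gval, dif_neg (by omega), dif_pos ⟨rfl, h1, h2⟩]

lemma cont_gval (k i : ℕ) : Continuous fun T : GIdx N → ℝ => gval N x T k i := by
  by_cases h : 1 ≤ i ∧ i ≤ k ∧ k ≤ N - 1
  · simp only [gval, dif_pos h]; exact continuous_apply _
  · by_cases h' : k = N ∧ 1 ≤ i ∧ i ≤ N
    · simp only [gval, dif_neg h, dif_pos h']; exact continuous_const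
    · simp only [gval, dif_neg h, dif_neg h']; exact continuous_const


lemma le_Bsum_left (T : GIdx N → ℝ) {k i : ℕ} (hk1 : 1 ≤ k) (hk2 : k ≤ N - 1)
    (hi1 : 1 ≤ i) (hi2 : i ≤ k) :
    Real.exp (gval N x T (k + 1) i - gval N x T k i) ≤ Bsum N x T := by
  have h1 : Real.exp (gval N x T (k + 1) i - gval N x T k i)
      ≤ Real.exp (gval N x T (k + 1) i - gval N x T k i)
        + Real.exp (gval N x T k i - gval N x T (k + 1) (i + 1)) :=
    le_add_of_nonneg_right (Real.exp_pos _).le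
  have h2 := Finset.single_le_sum
    (f := fun i => Real.exp (gval N x T (k + 1) i - gval N x T k i)
        + Real.exp (gval N x T k i - gval N x T (k + 1) (i + 1)))
    (fun j _ => by positivity) (Finset.mem_Icc.mpr ⟨hi1, hi2⟩)
  have h3 := Finset.single_le_sum
    (f := fun k => ∑ i ∈ Finset.Icc 1 k,
      (Real.exp (gval N x T (k + 1) i - gval N x T k i)
        + Real.exp (gval N x T k i - gval N x T (k + 1) (i + 1))))
    (fun j _ => Finset.sum_nonneg fun _ _ => by positivity)
    (Finset.mem_Icc.mpr ⟨hk1, hk2⟩)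
  exact h1.trans (h2.trans h3)

lemma le_Bsum_right (T : GIdx N → ℝ) {k i : ℕ} (hk1 : 1 ≤ k) (hk2 : k ≤ N - 1)
    (hi1 : 1 ≤ i) (hi2 : i ≤ k) :
    Real.exp (gval N x T k i - gval N x T (k + 1) (i + 1)) ≤ Bsum N x T := by
  have h1 : Real.exp (gval N x T k i - gval N x T (k + 1) (i + 1))
      ≤ Real.exp (gval N x T (k + 1) i - gval N x T k i)
        + Real.exp (gval N x T k i - gval N x T (k + 1) (i + 1)) :=
    le_add_of_nonneg_left (Real.exp_pos _).le
  have h2 := Finset.single_le_sum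
    (f := fun i => Real.exp (gval N x T (k + 1) i - gval N x T k i)
        + Real.exp (gval N x T k i - gval N x T (k + 1) (i + 1)))
    (fun j _ => by positivity) (Finset.mem_Icc.mpr ⟨hi1, hi2⟩)
  have h3 := Finset.single_le_sum
    (f := fun k => ∑ i ∈ Finset.Icc 1 k,
      (Real.exp (gval N x T (k + 1) i - gval N x T k i)
        + Real.exp (gval N x T k i - gval N x T (k + 1) (i + 1))))
    (fun j _ => Finset.sum_nonneg fun _ _ => by positivity)
    (Finset.mem_Icc.mpr ⟨hk1, hk2⟩)
  exact h1.trans (h2.trans h3)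

/-- 1-based row of `v`. -/
def kv (v : GIdx N) : ℕ := v.1.1.val + 1
/-- 1-based column of `v`. -/
def iv (v : GIdx N) : ℕ := v.1.2.val + 1
/-- The boundary index reached by the right path from `v`. -/
def rIdx (v : GIdx N) : Fin N := ⟨v.1.2.val + (N - (v.1.1.val + 1)), by have := v.2; omega⟩

lemma telescope_left (T : GIdx N → ℝ) (v : GIdx N) :
    ∑ j ∈ Finset.range (N - kv v),
      (gval N x T (kv v + j + 1) (iv v) - gval N x T (kv v + j) (iv v))
      = x v.1.2 - T v := by
  have hx : x v.1.2 = x ⟨iv v - 1, by unfold iv; omega⟩ := by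
    congr 1
  rw [hx]
  have hv := v.2
  have hN : 2 ≤ N := by omega
  have h := Finset.sum_range_sub (fun j => gval N x T (kv v + j) (iv v)) (N - kv v)
  simp only [← Nat.add_assoc, Nat.add_zero] at h
  rw [h]
  have hkN : kv v + (N - kv v) = N := by unfold kv at *; omega
  rw [hkN, gval_boundary T hN (by unfold iv; omega) (by unfold iv kv at *; omega)]
  have : gval N x T (kv v) (iv v) = T v := gval_idx T v
  rw [this]

lemma telescope_right (T : GIdx N → ℝ) (v : GIdx N) :
    ∑ j ∈ Finset.range (N - kv v),
      (gval N x T (kv v + j) (iv v + j) - gval N x T (kv v + j + 1) (iv v + j + 1))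
      = T v - x (rIdx v) := by
  have hx : x (rIdx v) = x ⟨iv v + (N - kv v) - 1, by have := v.2; unfold iv kv; omega⟩ := by
    have hv := v.2
    congr 1; apply Fin.ext; simp only [rIdx, iv, kv]; omega
  rw [hx]
  have hv := v.2
  have hN : 2 ≤ N := by omega
  have h := Finset.sum_range_sub' (fun j => gval N x T (kv v + j) (iv v + j)) (N - kv v)
  simp only [← Nat.add_assoc, Nat.add_zero] at h
  rw [h]
  have hkN : kv v + (N - kv v) = N := by unfold kv at *; omega
  rw [hkN, gval_boundary T hN (by unfold iv; omega) (by unfold iv kv at *; omega)]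
  have : gval N x T (kv v) (iv v) = T v := gval_idx T v
  rw [this]


lemma keyL (T : GIdx N → ℝ) (v : GIdx N) :
    Real.exp ((x v.1.2 - T v) / N) ≤ Bsum N x T + 1 := by
  have hv := v.2
  have hN : 2 ≤ N := by omega
  set s := x v.1.2 - T v with hs
  by_cases hsn : s ≤ 0
  · have h1 : Real.exp (s / N) ≤ 1 := by
      rw [← Real.exp_zero]
      apply Real.exp_le_exp.mpr
      have : (0:ℝ) < N := by positivity
      exact div_nonpos_of_nonpos_of_nonneg hsn this.le |>.trans_eq rfl
    linarith [Bsum_nonneg (x := x) T]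
  · push_neg at hsn
    have hMpos : 0 < N - kv v := by unfold kv; omega
    have hcard : ((Finset.range (N - kv v)).card : ℝ) = (N - kv v : ℕ) := by simp
    obtain ⟨j, hj, hge⟩ : ∃ j ∈ Finset.range (N - kv v),
        s / ((N - kv v : ℕ) : ℝ) ≤ gval N x T (kv v + j + 1) (iv v) - gval N x T (kv v + j) (iv v) := by
      apply Finset.exists_le_of_sum_le (Finset.nonempty_range_iff.mpr (by omega))
      rw [telescope_left, ← hs, Finset.sum_const, Finset.card_range, nsmul_eq_mul,
        mul_div_cancel₀ _ (show ((N - kv v : ℕ) : ℝ) ≠ 0 from Nat.cast_ne_zero.mpr (by omega))]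
    have hjlt := Finset.mem_range.mp hj
    have hedge : Real.exp (gval N x T (kv v + j + 1) (iv v) - gval N x T (kv v + j) (iv v))
        ≤ Bsum N x T := by
      apply le_Bsum_left T (k := kv v + j) (i := iv v) (by unfold kv; omega)
        (by unfold kv at *; omega) (by unfold iv; omega) (by unfold iv kv at *; omega)
    have h1 : s / N ≤ s / ((N - kv v : ℕ) : ℝ) := by
      apply div_le_div_of_nonneg_left hsn.le (by positivity)
      have : (N - kv v : ℕ) ≤ N := by omega
      exact_mod_cast this
    calc Real.exp (s / N) ≤ Real.exp (s / ((N - kv v : ℕ) : ℝ)) := Real.exp_le_exp.mpr h1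
      _ ≤ Real.exp (gval N x T (kv v + j + 1) (iv v) - gval N x T (kv v + j) (iv v)) :=
          Real.exp_le_exp.mpr hge
      _ ≤ Bsum N x T := hedge
      _ ≤ Bsum N x T + 1 := by linarith

lemma keyR (T : GIdx N → ℝ) (v : GIdx N) :
    Real.exp ((T v - x (rIdx v)) / N) ≤ Bsum N x T + 1 := by
  have hv := v.2
  have hN : 2 ≤ N := by omega
  set s := T v - x (rIdx v) with hs
  by_cases hsn : s ≤ 0
  · have h1 : Real.exp (s / N) ≤ 1 := by
      rw [← Real.exp_zero]
      apply Real.exp_le_exp.mpr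
      have : (0:ℝ) < N := by positivity
      exact div_nonpos_of_nonpos_of_nonneg hsn this.le |>.trans_eq rfl
    linarith [Bsum_nonneg (x := x) T]
  · push_neg at hsn
    have hMpos : 0 < N - kv v := by unfold kv; omega
    have hcard : ((Finset.range (N - kv v)).card : ℝ) = (N - kv v : ℕ) := by simp
    obtain ⟨j, hj, hge⟩ : ∃ j ∈ Finset.range (N - kv v),
        s / ((N - kv v : ℕ) : ℝ) ≤ gval N x T (kv v + j) (iv v + j)
          - gval N x T (kv v + j + 1) (iv v + j + 1) := by
      apply Finset.exists_le_of_sum_le (Finset.nonempty_range_iff.mpr (by omega))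
      rw [telescope_right, ← hs, Finset.sum_const, Finset.card_range, nsmul_eq_mul,
        mul_div_cancel₀ _ (show ((N - kv v : ℕ) : ℝ) ≠ 0 from Nat.cast_ne_zero.mpr (by omega))]
    have hjlt := Finset.mem_range.mp hj
    have hedge : Real.exp (gval N x T (kv v + j) (iv v + j) - gval N x T (kv v + j + 1) (iv v + j + 1))
        ≤ Bsum N x T := by
      have := le_Bsum_right (x := x) T (k := kv v + j) (i := iv v + j) (by unfold kv; omega)
        (by unfold kv at *; omega) (by unfold iv; omega) (by unfold iv kv at *; omega)
      simpa [Nat.add_assoc, Nat.add_comm, Nat.add_left_comm] using this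
    have h1 : s / N ≤ s / ((N - kv v : ℕ) : ℝ) := by
      apply div_le_div_of_nonneg_left hsn.le (by positivity)
      have : (N - kv v : ℕ) ≤ N := by omega
      exact_mod_cast this
    calc Real.exp (s / N) ≤ Real.exp (s / ((N - kv v : ℕ) : ℝ)) := Real.exp_le_exp.mpr h1
      _ ≤ Real.exp (gval N x T (kv v + j) (iv v + j) - gval N x T (kv v + j + 1) (iv v + j + 1)) :=
          Real.exp_le_exp.mpr hge
      _ ≤ Bsum N x T := hedge
      _ ≤ Bsum N x T + 1 := by linarith


lemma re_Fpot (lam : Fin N → ℝ) (T : GIdx N → ℝ) :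
    (Fpot N lam x T).re = -(Bsum N x T) := by
  have h1 : Fpot N lam x T = Complex.I * ((∑ a : Fin N, lam a *
      ((∑ i ∈ Finset.Icc 1 (a.val + 1), gval N x T (a.val + 1) i)
        - ∑ i ∈ Finset.Icc 1 a.val, gval N x T a.val i) : ℝ) : ℂ)
      - ((Bsum N x T : ℝ) : ℂ) := by
    rw [Fpot, Bsum]
    push_cast
    ring
  rw [h1]
  simp


lemma integrable_factor (c NR a b : ℝ) (hc : 0 < c) (hN : 0 < NR) :
    Integrable (fun t : ℝ =>
      Real.exp (-c * (Real.exp ((a - t) / NR) + Real.exp ((t - b) / NR)))) := by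
  set m := min (Real.exp (a / NR)) (Real.exp (-b / NR)) with hm
  have hmpos : 0 < m := lt_min (Real.exp_pos _) (Real.exp_pos _)
  set d := c * m / (2 * NR ^ 2) with hd
  have hdpos : 0 < d := by positivity
  apply Integrable.mono' (integrable_exp_neg_mul_sq hdpos)
  · exact Continuous.aestronglyMeasurable (by fun_prop)
  · filter_upwards with t
    rw [Real.norm_eq_abs, Real.abs_exp]
    apply Real.exp_le_exp.mpr
    have e1 : Real.exp ((a - t) / NR) = Real.exp (a / NR) * Real.exp (-t / NR) := by
      rw [← Real.exp_add]; congr 1; field_simp; ring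
    have e2 : Real.exp ((t - b) / NR) = Real.exp (-b / NR) * Real.exp (t / NR) := by
      rw [← Real.exp_add]; congr 1; field_simp; ring
    have h3 : m * (Real.exp (-t / NR) + Real.exp (t / NR))
        ≤ Real.exp ((a - t) / NR) + Real.exp ((t - b) / NR) := by
      rw [e1, e2, mul_add]
      gcongr
      exacts [min_le_left _ _, min_le_right _ _]
    have h4 : Real.exp (|t| / NR) ≤ Real.exp (-t / NR) + Real.exp (t / NR) := by
      rcases le_total 0 t with h | h
      · rw [abs_of_nonneg h]; exact le_add_of_nonneg_left (Real.exp_pos _).le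
      · rw [abs_of_nonpos h, neg_div]
        exact le_add_of_nonneg_right (Real.exp_pos _).le
    have h5 : (|t| / NR) ^ 2 / 2 ≤ Real.exp (|t| / NR) := by
      have hnn : (0 : ℝ) ≤ |t| / NR := by positivity
      have hs := Real.sum_le_exp_of_nonneg hnn 3
      simp [Finset.sum_range_succ, Nat.factorial] at hs
      nlinarith [hnn, hs]
    have h6 : d * t ^ 2 = c * (m * ((|t| / NR) ^ 2 / 2)) := by
      rw [hd, div_pow, sq_abs]
      field_simp
    have hmain : d * t ^ 2 ≤ c * (Real.exp ((a - t) / NR) + Real.exp ((t - b) / NR)) := by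
      calc d * t ^ 2 = c * (m * ((|t| / NR) ^ 2 / 2)) := h6
        _ ≤ c * (m * Real.exp (|t| / NR)) := by gcongr
        _ ≤ c * (m * (Real.exp (-t / NR) + Real.exp (t / NR))) := by gcongr
        _ ≤ c * (Real.exp ((a - t) / NR) + Real.exp ((t - b) / NR)) :=
            mul_le_mul_of_nonneg_left h3 hc.le
    linarith

end GivAux

namespace GivAux

lemma norm_givIntegrand {N : ℕ} {x : Fin N → ℝ} (hbar : ℝ) (lam : Fin N → ℝ)
    (T : GIdx N → ℝ) :
    ‖givIntegrand N hbar lam x T‖ = Real.exp (-(Bsum N x T) / hbar) := by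
  rw [givIntegrand, Complex.norm_exp, Complex.div_ofReal_re, re_Fpot]

lemma cont_integrand {N : ℕ} {x : Fin N → ℝ} (hbar : ℝ) (lam : Fin N → ℝ) :
    Continuous (givIntegrand N hbar lam x) := by
  unfold givIntegrand Fpot
  apply Complex.continuous_exp.comp
  apply Continuous.div_const
  apply Continuous.sub
  · apply continuous_const.mul
    apply continuous_finset_sum
    intro a _
    apply continuous_const.mul
    apply Continuous.sub <;>
    · apply continuous_finset_sum
      intro i _
      exact Complex.continuous_ofReal.comp (cont_gval _ _)
  · apply continuous_finset_sum
    intro k _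
    apply continuous_finset_sum
    intro i _
    apply Continuous.add <;>
    · exact Complex.continuous_ofReal.comp
        (Real.continuous_exp.comp ((cont_gval _ _).sub (cont_gval _ _)))

end GivAux

/-- the Givental integrand is absolutely integrable over `ℝ^{N(N−1)/2}`;
in particular the Givental integral `Ψ^{(N)}_λ(x)` is well defined. -/
theorem givental_integrand_integrable (N : ℕ) (hN : 2 ≤ N)
    (hbar : ℝ) (hhbar : 0 < hbar) (lam x : Fin N → ℝ) :
    Integrable (givIntegrand N hbar lam x) := by
  classical
  open GivAux in
  set M := Fintype.card (GIdx N) with hM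
  have hMpos : 0 < M := by
    rw [hM]
    exact Fintype.card_pos_iff.mpr
      ⟨⟨(⟨0, by omega⟩, ⟨0, by omega⟩), ⟨by simp, by simp; omega⟩⟩⟩
  have hMR : (0:ℝ) < (M : ℝ) := by exact_mod_cast hMpos
  set c : ℝ := 1 / (2 * (M : ℝ) * hbar) with hc
  have hcpos : 0 < c := by rw [hc]; positivity
  have hNR : (0:ℝ) < (N : ℝ) := by
    have : (0:ℕ) < N := by omega
    exact_mod_cast this
  set g : GIdx N → ℝ → ℝ := fun v t =>
    Real.exp (-c * (Real.exp ((x v.1.2 - t) / N)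
      + Real.exp ((t - x (GivAux.rIdx v)) / N))) with hg
  have hgint : ∀ v, Integrable (g v) := fun v =>
    GivAux.integrable_factor c N (x v.1.2) (x (GivAux.rIdx v)) hcpos hNR
  have hGint : Integrable (fun T : GIdx N → ℝ =>
      Real.exp (1 / hbar) * ∏ v, g v (T v)) :=
    (Integrable.fintype_prod hgint).const_mul _
  apply Integrable.mono' hGint ((cont_integrand hbar lam).aestronglyMeasurable)
  filter_upwards with T
  rw [norm_givIntegrand hbar lam T]
  have hsum : ∑ v : GIdx N,
      (Real.exp ((x v.1.2 - T v) / N) + Real.exp ((T v - x (GivAux.rIdx v)) / N))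
      ≤ 2 * (M : ℝ) * (Bsum N x T + 1) := by
    calc ∑ v : GIdx N,
        (Real.exp ((x v.1.2 - T v) / N) + Real.exp ((T v - x (GivAux.rIdx v)) / N))
        ≤ ∑ _v : GIdx N, ((Bsum N x T + 1) + (Bsum N x T + 1)) :=
          Finset.sum_le_sum fun v _ => add_le_add (keyL T v) (keyR T v)
      _ = 2 * (M : ℝ) * (Bsum N x T + 1) := by
          rw [Finset.sum_const, Finset.card_univ, ← hM, nsmul_eq_mul]; ring
  have hrhs : Real.exp (1 / hbar) * ∏ v, g v (T v)
      = Real.exp (1 / hbar + ∑ v : GIdx N, -c * (Real.exp ((x v.1.2 - T v) / N)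
          + Real.exp ((T v - x (GivAux.rIdx v)) / N))) := by
    rw [Real.exp_add, Real.exp_sum]
  rw [hrhs]
  apply Real.exp_le_exp.mpr
  have h2 : ∑ v : GIdx N, -c * (Real.exp ((x v.1.2 - T v) / N)
        + Real.exp ((T v - x (GivAux.rIdx v)) / N))
      = -c * ∑ v : GIdx N, (Real.exp ((x v.1.2 - T v) / N)
        + Real.exp ((T v - x (GivAux.rIdx v)) / N)) := by
    rw [Finset.mul_sum]
  rw [h2]
  have h3 : c * ∑ v : GIdx N, (Real.exp ((x v.1.2 - T v) / N)
        + Real.exp ((T v - x (GivAux.rIdx v)) / N))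
      ≤ c * (2 * (M : ℝ) * (Bsum N x T + 1)) :=
    mul_le_mul_of_nonneg_left hsum hcpos.le
  have h4 : c * (2 * (M : ℝ) * (Bsum N x T + 1)) = (Bsum N x T + 1) / hbar := by
    rw [hc]
    field_simp
  have h5 : -(Bsum N x T) / hbar = 1 / hbar - (Bsum N x T + 1) / hbar := by
    field_simp
    ring
  linarith
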